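/- Let G = (V,E) be a finite simple graph, S ⊆ V, and y > 0. Then Σ_{F ∈ 𝓕_{G,S}} y^{|F|} ≤ Π_{s ∈ S} T_{G,s}(y), where 𝓕_{G,S} is the set of broken-circuit-free forests of G whose every non-trivial component contains at least one vertex of S, and T_{G,s}(y) = Σ_T y^{|T|} over subtrees T of G containing s. -/

import Mathlib

open Finset

attribute [local instance] Classical.propDecidable

variable {V : Type} [Fintype V] [DecidableEq V]

/-- Vertex support of an edge set: the non-isolated vertices. -/
def edgeSupp (F : Finset (Sym2 V)) : Finset V :=
  Finset.univ.filter fun v => ∃ e ∈ F, v ∈ e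

/-- `C` is the edge set of a cycle of `G`. -/
def IsCircuit (G : SimpleGraph V) (C : Finset (Sym2 V)) : Prop :=
  ∃ (v : V) (w : G.Walk v v), w.IsCycle ∧ C = w.edges.toFinset

/-- `B` is a broken circuit of `G` w.r.t. the edge ordering `ord`. -/
def IsBrokenCircuit (G : SimpleGraph V) (ord : Sym2 V → ℕ) (B : Finset (Sym2 V)) : Prop :=
  ∃ C, IsCircuit G C ∧ ∃ e ∈ C, (∀ f ∈ C, ord f ≤ ord e) ∧ B = C.erase e

/-- `F` is a broken-circuit-free set of edges of `G`. -/
def IsBCF (G : SimpleGraph V) (ord : Sym2 V → ℕ) (F : Finset (Sym2 V)) : Prop :=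
  F ⊆ G.edgeFinset ∧ ∀ B, IsBrokenCircuit G ord B → ¬ B ⊆ F

/-- `F` is (the edge set of) a subtree of `G`: a connected acyclic edge subset. -/
def IsSubtree (G : SimpleGraph V) (F : Finset (Sym2 V)) : Prop :=
  F ⊆ G.edgeFinset ∧ (SimpleGraph.fromEdgeSet (↑F : Set (Sym2 V))).IsAcyclic ∧
    ∀ a ∈ edgeSupp F, ∀ b ∈ edgeSupp F,
      (SimpleGraph.fromEdgeSet (↑F : Set (Sym2 V))).Reachable a b

/-- The rooted tree generating function `T_{G,v}(x)`. -/
noncomputable def treeSum (G : SimpleGraph V) (v : V) (x : ℝ) : ℝ :=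
  ∑ F ∈ G.edgeFinset.powerset.filter
      (fun F => IsSubtree G F ∧ (F ≠ ∅ → v ∈ edgeSupp F)), x ^ F.card

/-! ### Auxiliary machinery -/

/-- Element of minimal rank in a nonempty finset. -/
noncomputable def minRep (R : Finset V) (h : R.Nonempty) : V :=
  (R.exists_min_image (fun v => (Fintype.equivFin V v : ℕ)) h).choose

lemma minRep_mem (R : Finset V) (h : R.Nonempty) : minRep R h ∈ R :=
  (R.exists_min_image (fun v => (Fintype.equivFin V v : ℕ)) h).choose_spec.1

/-- Elements of `S` reachable from the edge `e`. -/
noncomputable def RSet (G' : SimpleGraph V) (S : Finset V) (e : Sym2 V) : Finset V :=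
  S.filter fun s => ∃ v ∈ e, G'.Reachable v s

/-- The component of the forest `F` assigned to `s`. -/
noncomputable def comp (F : Finset (Sym2 V)) (S : Finset V) (s : V) : Finset (Sym2 V) :=
  F.filter fun e =>
    ∃ h : (RSet (SimpleGraph.fromEdgeSet (↑F : Set (Sym2 V))) S e).Nonempty, minRep _ h = s

lemma mem_edgeSupp {F : Finset (Sym2 V)} {v : V} :
    v ∈ edgeSupp F ↔ ∃ e ∈ F, v ∈ e := by
  simp [edgeSupp]

lemma walk_reach {G' : SimpleGraph V} {a b : V} (w : G'.Walk a b) {e : Sym2 V}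
    (he : e ∈ w.edges) {v : V} (hv : v ∈ e) : G'.Reachable a v := by
  induction e with
  | _ x y =>
    rcases Sym2.mem_iff.mp hv with rfl | rfl
    · exact ⟨w.takeUntil v (w.fst_mem_support_of_mem_edges he)⟩
    · exact ⟨w.takeUntil v (w.snd_mem_support_of_mem_edges he)⟩

lemma edge_reach {F : Finset (Sym2 V)} {e : Sym2 V} (heF : e ∈ F) (hd : ¬ e.IsDiag)
    {v v' : V} (hv : v ∈ e) (hv' : v' ∈ e) :
    (SimpleGraph.fromEdgeSet (↑F : Set (Sym2 V))).Reachable v v' := by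
  induction e with
  | _ x y =>
    have hxy : x ≠ y := by simpa using hd
    have hadj : (SimpleGraph.fromEdgeSet (↑F : Set (Sym2 V))).Adj x y := by
      rw [SimpleGraph.fromEdgeSet_adj]; exact ⟨by simpa using heF, hxy⟩
    rcases Sym2.mem_iff.mp hv with rfl | rfl <;> rcases Sym2.mem_iff.mp hv' with rfl | rfl
    · exact SimpleGraph.Reachable.refl _
    · exact hadj.reachable
    · exact hadj.symm.reachable
    · exact SimpleGraph.Reachable.refl _

lemma RSet_congr {G' : SimpleGraph V} {S : Finset V} {e e' : Sym2 V}
    (h : ∀ v ∈ e, ∀ v' ∈ e', G'.Reachable v v') : RSet G' S e = RSet G' S e' := by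
  induction e with
  | _ x y =>
    induction e' with
    | _ x' y' =>
      unfold RSet
      ext s
      simp only [mem_filter, and_congr_right_iff]
      intro _
      constructor
      · rintro ⟨v, hv, hr⟩
        exact ⟨x', Sym2.mem_mk_left _ _, ((h v hv x' (Sym2.mem_mk_left _ _)).symm.trans hr)⟩
      · rintro ⟨v', hv', hr⟩
        exact ⟨x, Sym2.mem_mk_left _ _, (h x (Sym2.mem_mk_left _ _) v' hv').trans hr⟩

/-- non-diagonality of edges of a subgraph edge set -/
lemma nondiag_of_subset {G : SimpleGraph V} {F : Finset (Sym2 V)} (hF : F ⊆ G.edgeFinset)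
    {e : Sym2 V} (he : e ∈ F) : ¬ e.IsDiag :=
  G.not_isDiag_of_mem_edgeSet (SimpleGraph.mem_edgeFinset.mp (hF he))

lemma mem_RSet {G' : SimpleGraph V} {S : Finset V} {e : Sym2 V} {s : V} :
    s ∈ RSet G' S e ↔ s ∈ S ∧ ∃ v ∈ e, G'.Reachable v s := by
  unfold RSet; exact mem_filter

lemma reach_s_of_mem_comp {F : Finset (Sym2 V)} {S : Finset V} {s : V} {e : Sym2 V}
    (he : e ∈ comp F S s) :
    e ∈ F ∧ ∃ v ∈ e, (SimpleGraph.fromEdgeSet (↑F : Set (Sym2 V))).Reachable v s := by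
  obtain ⟨heF, h, hm⟩ := mem_filter.mp he
  have hmem := minRep_mem _ h
  rw [hm] at hmem
  exact ⟨heF, (mem_RSet.mp hmem).2⟩

lemma mem_comp_of_reach {G : SimpleGraph V} {F : Finset (Sym2 V)} (hF : F ⊆ G.edgeFinset)
    {S : Finset V} {s : V} {e e'' : Sym2 V} (he : e ∈ comp F S s) (he'' : e'' ∈ F)
    (hr : ∃ u ∈ e'', (SimpleGraph.fromEdgeSet (↑F : Set (Sym2 V))).Reachable u s) :
    e'' ∈ comp F S s := by
  obtain ⟨heF, h, hm⟩ := mem_filter.mp he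
  obtain ⟨heF', ⟨v, hv, hvs⟩⟩ := reach_s_of_mem_comp he
  obtain ⟨u, hu, hus⟩ := hr
  have hEq : RSet (SimpleGraph.fromEdgeSet (↑F : Set (Sym2 V))) S e''
      = RSet (SimpleGraph.fromEdgeSet (↑F : Set (Sym2 V))) S e := by
    apply RSet_congr
    intro a ha b hb
    have h1 : (SimpleGraph.fromEdgeSet (↑F : Set (Sym2 V))).Reachable a s :=
      (edge_reach he'' (nondiag_of_subset hF he'') ha hu).trans hus
    have h2 : (SimpleGraph.fromEdgeSet (↑F : Set (Sym2 V))).Reachable b s :=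
      (edge_reach heF (nondiag_of_subset hF heF) hb hv).trans hvs
    exact h1.trans h2.symm
  refine mem_filter.mpr ⟨he'', ?_⟩
  rw [hEq]
  exact ⟨h, hm⟩

lemma bcf_acyclic (G : SimpleGraph V) (ord : Sym2 V → ℕ) {F : Finset (Sym2 V)}
    (hF : IsBCF G ord F) : (SimpleGraph.fromEdgeSet (↑F : Set (Sym2 V))).IsAcyclic := by
  intro v c hc
  have hedges : ∀ e ∈ c.edges, e ∈ F := by
    intro e he
    have h1 := c.edges_subset_edgeSet he
    rw [SimpleGraph.edgeSet_fromEdgeSet] at h1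
    exact_mod_cast h1.1
  have hsub : ∀ e ∈ c.edges, e ∈ G.edgeSet := fun e he =>
    SimpleGraph.mem_edgeFinset.mp (hF.1 (hedges e he))
  set w := c.transfer G hsub with hw
  have hwc : w.IsCycle := hc.transfer hsub
  have hwe : w.edges = c.edges := c.edges_transfer hsub
  set C := w.edges.toFinset with hC
  have hCle : C ⊆ F := by
    intro e he
    exact hedges e (hwe ▸ List.mem_toFinset.mp he)
  have hnil : w.edges ≠ [] := by
    intro hcon
    have h3 := hwc.three_le_length
    rw [← SimpleGraph.Walk.length_edges, hcon] at h3
    simp at h3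
  have hCne : C.Nonempty := ⟨w.edges.head hnil, List.mem_toFinset.mpr (List.head_mem hnil)⟩
  obtain ⟨e, heC, hmax⟩ := C.exists_max_image ord hCne
  exact hF.2 (C.erase e) ⟨C, ⟨v, w, hwc, rfl⟩, e, heC, hmax, rfl⟩
    ((erase_subset e C).trans hCle)

lemma comp_subtree (G : SimpleGraph V) {F : Finset (Sym2 V)} (hF : F ⊆ G.edgeFinset)
    (hac : (SimpleGraph.fromEdgeSet (↑F : Set (Sym2 V))).IsAcyclic)
    (S : Finset V) (s : V) :
    IsSubtree G (comp F S s) ∧ (comp F S s ≠ ∅ → s ∈ edgeSupp (comp F S s)) := by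
  have hcompF : comp F S s ⊆ F := filter_subset _ _
  have hcompG : comp F S s ⊆ G.edgeFinset := hcompF.trans hF
  have hle : SimpleGraph.fromEdgeSet (↑(comp F S s) : Set (Sym2 V)) ≤
      SimpleGraph.fromEdgeSet (↑F : Set (Sym2 V)) := by
    apply SimpleGraph.fromEdgeSet_mono
    exact_mod_cast hcompF
  constructor
  · refine ⟨hcompG, ?_, ?_⟩
    · intro v c hc
      exact hac (c.mapLe hle) (hc.mapLe _)
    · intro a ha b hb
      obtain ⟨ea, hea, haa⟩ := mem_edgeSupp.mp ha
      obtain ⟨eb, heb, hbb⟩ := mem_edgeSupp.mp hb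
      obtain ⟨heaF, va, hva, hvas⟩ := reach_s_of_mem_comp hea
      obtain ⟨hebF, vb, hvb, hvbs⟩ := reach_s_of_mem_comp heb
      have ra : (SimpleGraph.fromEdgeSet (↑F : Set (Sym2 V))).Reachable a s :=
        (edge_reach heaF (nondiag_of_subset hF heaF) haa hva).trans hvas
      have rb : (SimpleGraph.fromEdgeSet (↑F : Set (Sym2 V))).Reachable b s :=
        (edge_reach hebF (nondiag_of_subset hF hebF) hbb hvb).trans hvbs
      obtain ⟨w⟩ := ra.trans rb.symm
      have hall : ∀ f ∈ w.edges,
          f ∈ (SimpleGraph.fromEdgeSet (↑(comp F S s) : Set (Sym2 V))).edgeSet := by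
        intro f hf
        have h1 := w.edges_subset_edgeSet hf
        rw [SimpleGraph.edgeSet_fromEdgeSet] at h1
        have hfF : f ∈ F := by exact_mod_cast h1.1
        have hu : f.out.1 ∈ f := Sym2.out_fst_mem f
        have hfc : f ∈ comp F S s := mem_comp_of_reach hF hea hfF
          ⟨f.out.1, hu, (walk_reach w hf hu).symm.trans ra⟩
        rw [SimpleGraph.edgeSet_fromEdgeSet]
        exact ⟨by exact_mod_cast hfc, h1.2⟩
      exact ⟨w.transfer _ hall⟩
  · intro hne
    obtain ⟨e, he⟩ := nonempty_iff_ne_empty.mpr hne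
    obtain ⟨heF, v, hv, hvs⟩ := reach_s_of_mem_comp he
    by_cases hvsne : v = s
    · exact mem_edgeSupp.mpr ⟨e, he, hvsne ▸ hv⟩
    · obtain ⟨w0⟩ := hvs
      set w := w0.reverse with hwdef
      have hnn : ¬ w.Nil := SimpleGraph.Walk.not_nil_of_ne (Ne.symm hvsne)
      have hadj : (SimpleGraph.fromEdgeSet (↑F : Set (Sym2 V))).Adj s (w.getVert 1) :=
        w.adj_snd hnn
      have he0F : s(s, w.getVert 1) ∈ F := by
        have := (SimpleGraph.fromEdgeSet_adj _).mp hadj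
        exact_mod_cast this.1
      have he0c : s(s, w.getVert 1) ∈ comp F S s :=
        mem_comp_of_reach hF he he0F
          ⟨s, Sym2.mem_mk_left _ _, SimpleGraph.Reachable.refl _⟩
      exact mem_edgeSupp.mpr ⟨_, he0c, Sym2.mem_mk_left _ _⟩

lemma comp_biUnion {F : Finset (Sym2 V)} {S : Finset V}
    (hS : ∀ a ∈ edgeSupp F, ∃ s ∈ S,
      (SimpleGraph.fromEdgeSet (↑F : Set (Sym2 V))).Reachable a s) :
    S.biUnion (fun s => comp F S s) = F := by
  ext e
  simp only [mem_biUnion]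
  constructor
  · rintro ⟨s, _, he⟩
    exact (mem_filter.mp he).1
  · intro he
    induction e with
    | _ x y =>
      have hx : x ∈ edgeSupp F := mem_edgeSupp.mpr ⟨_, he, Sym2.mem_mk_left _ _⟩
      obtain ⟨s, hsS, hr⟩ := hS x hx
      have hne : (RSet (SimpleGraph.fromEdgeSet (↑F : Set (Sym2 V))) S s(x, y)).Nonempty :=
        ⟨s, mem_RSet.mpr ⟨hsS, x, Sym2.mem_mk_left _ _, hr⟩⟩
      refine ⟨minRep _ hne, ?_, ?_⟩
      · exact (mem_RSet.mp (minRep_mem _ hne)).1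
      · exact mem_filter.mpr ⟨he, hne, rfl⟩

lemma comp_disjoint {F : Finset (Sym2 V)} {S : Finset V} {s t : V} (hst : s ≠ t) :
    Disjoint (comp F S s) (comp F S t) := by
  rw [disjoint_left]
  intro e hes het
  obtain ⟨_, h1, hm1⟩ := mem_filter.mp hes
  obtain ⟨_, h2, hm2⟩ := mem_filter.mp het
  exact hst (hm1.symm.trans hm2)

set_option maxHeartbeats 1000000 in
/-- Inequality (2.1): `Σ_{F ∈ 𝓕_{G,S}} y^{|F|} ≤ Π_{s ∈ S} T_{G,s}(y)`, where `𝓕_{G,S}`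
is the set of BCF forests of `G` whose every non-trivial component meets `S`. -/
theorem bcf_forest_le_prod_treeSum (G : SimpleGraph V) (ord : Sym2 V → ℕ)
    (hord : Set.InjOn ord G.edgeSet) (S : Finset V) (y : ℝ) (hy : 0 < y) :
    ∑ F ∈ G.edgeFinset.powerset.filter (fun F => IsBCF G ord F ∧
        ∀ a ∈ edgeSupp F, ∃ s ∈ S,
          (SimpleGraph.fromEdgeSet (↑F : Set (Sym2 V))).Reachable a s),
      y ^ F.card ≤ ∏ s ∈ S, treeSum G s y := by
  set A : V → Finset (Finset (Sym2 V)) := fun s => G.edgeFinset.powerset.filter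
      (fun T => IsSubtree G T ∧ (T ≠ ∅ → s ∈ edgeSupp T)) with hA
  set 𝓕 : Finset (Finset (Sym2 V)) := G.edgeFinset.powerset.filter (fun F => IsBCF G ord F ∧
      ∀ a ∈ edgeSupp F, ∃ s ∈ S,
        (SimpleGraph.fromEdgeSet (↑F : Set (Sym2 V))).Reachable a s) with h𝓕
  have hmem : ∀ F ∈ 𝓕, F ⊆ G.edgeFinset ∧ IsBCF G ord F ∧
      ∀ a ∈ edgeSupp F, ∃ s ∈ S,
        (SimpleGraph.fromEdgeSet (↑F : Set (Sym2 V))).Reachable a s := by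
    intro F hFm
    rw [h𝓕, mem_filter, mem_powerset] at hFm
    exact ⟨hFm.1, hFm.2⟩
  have hdecomp : ∀ F ∈ 𝓕, S.biUnion (fun s => comp F S s) = F := by
    intro F hFm
    exact comp_biUnion (hmem F hFm).2.2
  have hcard : ∀ F ∈ 𝓕, F.card = ∑ s ∈ S, (comp F S s).card := by
    intro F hFm
    rw [← hdecomp F hFm, card_biUnion]
    · rw [hdecomp F hFm]
    · intro s _ t _ hst
      exact comp_disjoint hst
  set Φ : Finset (Sym2 V) → (∀ a ∈ S, Finset (Sym2 V)) :=
    fun F => fun s _ => comp F S s with hΦ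
  have hinj : ∀ F₁ ∈ 𝓕, ∀ F₂ ∈ 𝓕, Φ F₁ = Φ F₂ → F₁ = F₂ := by
    intro F₁ h₁ F₂ h₂ hEq
    have : ∀ s ∈ S, comp F₁ S s = comp F₂ S s := by
      intro s hs
      exact congrFun (congrFun hEq s) hs
    rw [← hdecomp F₁ h₁, ← hdecomp F₂ h₂]
    exact biUnion_congr rfl this
  have hsubset : 𝓕.image Φ ⊆ S.pi A := by
    intro p hp
    obtain ⟨F, hFm, rfl⟩ := mem_image.mp hp
    rw [mem_pi]
    intro a ha
    have hFG := (hmem F hFm).1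
    have hac := bcf_acyclic G ord (hmem F hFm).2.1
    have hst := comp_subtree G hFG hac S a
    simp only [hA, mem_filter, mem_powerset]
    exact ⟨(filter_subset _ _).trans hFG, hst⟩
  calc ∑ F ∈ 𝓕, y ^ F.card
      = ∑ F ∈ 𝓕, ∏ x ∈ S.attach, y ^ (comp F S x.1).card := by
        refine sum_congr rfl fun F hFm => ?_
        rw [prod_pow_eq_pow_sum]
        congr 1
        rw [hcard F hFm, ← sum_attach S (fun s => (comp F S s).card)]
    _ = ∑ p ∈ 𝓕.image Φ, ∏ x ∈ S.attach, y ^ (p x.1 x.2).card := by rw [sum_image hinj]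
    _ ≤ ∑ p ∈ S.pi A, ∏ x ∈ S.attach, y ^ (p x.1 x.2).card :=
        sum_le_sum_of_subset_of_nonneg hsubset
          (fun p _ _ => prod_nonneg fun x _ => pow_nonneg hy.le _)
    _ = ∏ s ∈ S, ∑ T ∈ A s, y ^ T.card := (prod_sum S (fun s => A s) (fun _ T => y ^ T.card)).symm
    _ = ∏ s ∈ S, treeSum G s y := rfl
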